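/- Let p be prime, ζ = e^{2πi/p}, and let V be the (p-1)×(p-1) Vandermonde matrix with V_{ij} = ζ^{ij} (1 ≤ i,j ≤ p-1). Then |per(V)|² ≤ (1 + (p-2)p^{p-1})/(p-1). -/

import Mathlib

open Finset Equiv
open scoped Matrix ComplexConjugate

variable {n : Type*} [DecidableEq n] [Fintype n]

namespace PermCS

variable (A : Matrix n n ℂ)

/-- entry product along a function -/
def e (A : Matrix n n ℂ) (f : n → n) : ℂ := ∏ i, A i (f i)

/-- fiber count invariant -/
def minv (f : n → n) : n → ℕ := fun b => (univ.filter fun a => f a = b).card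

/-- number of permutations translating f to g -/
def k (f g : n → n) : ℕ := (univ.filter fun τ : Perm n => f ∘ ⇑τ = g).card

lemma minv_comp (f : n → n) (τ : Perm n) : minv (f ∘ ⇑τ) = minv f := by
  funext b
  refine Finset.card_bij (fun a _ => τ a) ?_ ?_ ?_
  · intro a ha
    simp only [mem_filter, mem_univ, true_and, Function.comp_apply] at ha ⊢
    exact ha
  · intro a _ a' _ h; exact τ.injective h
  · intro b' hb'
    simp only [mem_filter, mem_univ, true_and, Function.comp_apply] at hb' ⊢
    exact ⟨τ.symm b', by simp [hb'], by simp⟩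

lemma exists_perm_of_minv_eq {f g : n → n} (h : minv f = minv g) : ∃ τ : Perm n, f ∘ ⇑τ = g := by
  have hcard : ∀ b, Fintype.card {a // g a = b} = Fintype.card {a // f a = b} := by
    intro b
    rw [Fintype.card_subtype, Fintype.card_subtype]
    exact (congrFun h b).symm
  let eq : ∀ b, {a // g a = b} ≃ {a // f a = b} := fun b => Fintype.equivOfCardEq (hcard b)
  refine ⟨((sigmaFiberEquiv g).symm.trans ((Equiv.sigmaCongrRight eq).trans
    (sigmaFiberEquiv f))), ?_⟩
  funext a
  simp only [Function.comp_apply, Equiv.trans_apply]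
  have : ((sigmaFiberEquiv g).symm a) = ⟨g a, ⟨a, rfl⟩⟩ := rfl
  rw [this]
  exact (eq (g a) ⟨a, rfl⟩).2

lemma k_eq_of (f g f' g' : n → n) (τa τb : Perm n) (ha : f ∘ ⇑τa = f') (hb : g ∘ ⇑τb = g') :
    k f g = k f' g' := by
  refine Finset.card_bij' (fun τ _ => τa⁻¹ * τ * τb) (fun τ' _ => τa * τ' * τb⁻¹) ?_ ?_ ?_ ?_
  · intro τ hτ
    simp only [mem_filter, mem_univ, true_and] at hτ ⊢
    subst ha hb
    funext x
    simp [hτ, ← congrFun hτ (τb x)]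
  · intro τ' hτ'
    simp only [mem_filter, mem_univ, true_and] at hτ' ⊢
    subst ha hb
    funext x
    have := congrFun hτ' (τb⁻¹ x)
    simp at this ⊢
    simpa using this
  · intro τ _; group
  · intro τ _; group

lemma k_ne_zero (f g : n → n) (h : k f g ≠ 0) : minv f = minv g := by
  rw [k, Finset.card_ne_zero] at h
  obtain ⟨τ, hτ⟩ := h.exists_mem
  simp only [mem_filter] at hτ
  rw [← hτ.2, minv_comp]

lemma one_le_k_self (f : n → n) : 1 ≤ k f f := by
  rw [k, Nat.one_le_iff_ne_zero, Finset.card_ne_zero]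
  exact ⟨1, by simp⟩

end PermCS

namespace PermCS

lemma sum_perm_e (A : Matrix n n ℂ) : ∑ τ : Perm n, e A ⇑τ = A.permanent := by
  rw [← Matrix.permanent_transpose]
  simp [Matrix.permanent, e, Matrix.transpose_apply]

lemma sum_comp_eq (A : Matrix n n ℂ) (f : n → n) :
    ∑ τ : Perm n, e A (f ∘ ⇑τ) = ∑ g : n → n, (k f g : ℂ) * e A g := by
  rw [← Finset.sum_fiberwise_of_maps_to (g := fun τ : Perm n => f ∘ ⇑τ)
    (fun τ _ => mem_univ (f ∘ ⇑τ)) (fun τ => e A (f ∘ ⇑τ))]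
  refine Finset.sum_congr rfl fun g _ => ?_
  have : ∀ τ ∈ univ.filter (fun τ : Perm n => f ∘ ⇑τ = g), e A (f ∘ ⇑τ) = e A g := by
    intro τ hτ
    rw [(mem_filter.mp hτ).2]
  rw [Finset.sum_congr rfl this, Finset.sum_const, nsmul_eq_mul]
  rfl

lemma expand (A : Matrix n n ℂ) :
    (A * Aᴴ).permanent = ∑ f : n → n, (starRingEnd ℂ) (e A f) * ∑ τ : Perm n, e A (f ∘ ⇑τ) := by
  have h1 : (A * Aᴴ).permanent
      = ∑ σ : Perm n, ∏ i, ∑ j, A (σ i) j * (starRingEnd ℂ) (A i j) := by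
    simp [Matrix.permanent, Matrix.mul_apply, Matrix.conjTranspose_apply, Complex.star_def]
  rw [h1]
  have h2 : ∀ σ : Perm n, ∏ i, ∑ j, A (σ i) j * (starRingEnd ℂ) (A i j)
      = ∑ f : n → n, (starRingEnd ℂ) (e A f) * ∏ i, A (σ i) (f i) := by
    intro σ
    rw [Finset.prod_univ_sum]
    rw [Fintype.piFinset_univ]
    refine Finset.sum_congr rfl fun f _ => ?_
    rw [Finset.prod_mul_distrib, e, map_prod]
    ring
  rw [Finset.sum_congr rfl (fun σ _ => h2 σ), Finset.sum_comm]
  refine Finset.sum_congr rfl fun f _ => ?_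
  rw [← Finset.mul_sum]
  congr 1
  have h3 : ∀ σ : Perm n, ∏ i, A (σ i) (f i) = e A (f ∘ ⇑σ⁻¹) := by
    intro σ
    rw [e]
    rw [← Equiv.prod_comp σ (fun j => A j ((f ∘ ⇑σ⁻¹) j))]
    refine Finset.prod_congr rfl fun i _ => ?_
    simp
  rw [Finset.sum_congr rfl (fun σ _ => h3 σ)]
  exact Fintype.sum_bijective Inv.inv (inv_involutive).bijective _ _ (fun σ => rfl)

end PermCS

namespace PermCS

noncomputable def Z (A : Matrix n n ℂ) (μ : n → ℕ) : ℂ :=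
  ∑ g ∈ univ.filter (fun g : n → n => minv g = μ), e A g

lemma Z_id (A : Matrix n n ℂ) : Z A (minv (id : n → n)) = A.permanent := by
  rw [← sum_perm_e, Z]
  symm
  refine Finset.sum_bij (fun (τ : Perm n) _ => ⇑τ) ?_ ?_ ?_ ?_
  · intro τ _
    simp only [mem_filter, mem_univ, true_and]
    have : (⇑τ : n → n) = id ∘ ⇑τ := rfl
    rw [this, minv_comp]
  · intro σ _ τ _ h
    exact Equiv.coe_fn_injective h
  · intro g hg
    have hg' : minv (id : n → n) = minv g := ((mem_filter.mp hg).2).symm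
    obtain ⟨τ, hτ⟩ := exists_perm_of_minv_eq hg'
    exact ⟨τ, mem_univ τ, hτ⟩
  · intro τ _
    rfl

lemma key (A : Matrix n n ℂ) :
    (A * Aᴴ).permanent = ∑ μ ∈ univ.image (minv (n := n)),
      ∑ f ∈ univ.filter (fun f : n → n => minv f = μ),
        (k f f : ℂ) * ((starRingEnd ℂ) (e A f) * Z A (minv f)) := by
  rw [Finset.sum_fiberwise_of_maps_to (fun f _ => mem_image_of_mem minv (mem_univ f))]
  rw [expand]
  refine Finset.sum_congr rfl fun f _ => ?_
  rw [sum_comp_eq]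
  have hsplit : ∑ g : n → n, (k f g : ℂ) * e A g = (k f f : ℂ) * Z A (minv f) := by
    rw [Z, ← Finset.sum_filter_add_sum_filter_not univ (fun g : n → n => minv g = minv f)]
    have hz : ∀ g ∈ univ.filter (fun g : n → n => ¬ minv g = minv f), (k f g : ℂ) * e A g = 0 := by
      intro g hg
      have : k f g = 0 := by
        by_contra hk
        exact (mem_filter.mp hg).2 ((k_ne_zero f g hk).symm)
      rw [this]; simp
    rw [Finset.sum_congr rfl hz, Finset.sum_const_zero, add_zero, Finset.mul_sum]
    refine Finset.sum_congr rfl fun g hg => ?_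
    have hg' : minv g = minv f := (mem_filter.mp hg).2
    obtain ⟨τ, hτ⟩ := exists_perm_of_minv_eq hg'
    rw [k_eq_of f g f f 1 τ (by simp) hτ]
  rw [hsplit]
  ring

theorem cs (A : Matrix n n ℂ) : ‖A.permanent‖ ^ 2 ≤ (A * Aᴴ).permanent.re := by
  have hterm : ∀ μ ∈ univ.image (minv (n := n)), ∃ s : ℕ, 1 ≤ s ∧
      (∑ f ∈ univ.filter (fun f : n → n => minv f = μ),
        (k f f : ℂ) * ((starRingEnd ℂ) (e A f) * Z A (minv f)))
      = (((s : ℝ) * Complex.normSq (Z A μ) : ℝ) : ℂ) := by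
    intro μ hμ
    obtain ⟨f₀, _, hf₀⟩ := mem_image.mp hμ
    refine ⟨k f₀ f₀, one_le_k_self f₀, ?_⟩
    have step1 : ∀ f ∈ univ.filter (fun f : n → n => minv f = μ),
        (k f f : ℂ) * ((starRingEnd ℂ) (e A f) * Z A (minv f))
        = (k f₀ f₀ : ℂ) * ((starRingEnd ℂ) (e A f) * Z A μ) := by
      intro f hf
      have hf' : minv f = μ := (mem_filter.mp hf).2
      obtain ⟨τ, hτ⟩ := exists_perm_of_minv_eq (hf'.trans hf₀.symm)
      rw [k_eq_of f f f₀ f₀ τ τ hτ hτ, hf']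
    rw [Finset.sum_congr rfl step1, ← Finset.mul_sum, ← Finset.sum_mul, ← map_sum, ← Z]
    rw [show ((starRingEnd ℂ) (Z A μ)) * Z A μ = Z A μ * (starRingEnd ℂ) (Z A μ) from mul_comm _ _,
      Complex.mul_conj]
    push_cast
    ring
  have hre : ∀ μ ∈ univ.image (minv (n := n)),
      0 ≤ (∑ f ∈ univ.filter (fun f : n → n => minv f = μ),
        (k f f : ℂ) * ((starRingEnd ℂ) (e A f) * Z A (minv f))).re := by
    intro μ hμ
    obtain ⟨s, _, hs⟩ := hterm μ hμ
    rw [hs, Complex.ofReal_re]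
    exact mul_nonneg (by positivity) (Complex.normSq_nonneg _)
  have hmem : minv (id : n → n) ∈ univ.image (minv (n := n)) :=
    mem_image_of_mem minv (mem_univ _)
  obtain ⟨s, hs1, hs⟩ := hterm _ hmem
  have h0 : Complex.normSq A.permanent ≤ (∑ f ∈ univ.filter
      (fun f : n → n => minv f = minv (id : n → n)),
        (k f f : ℂ) * ((starRingEnd ℂ) (e A f) * Z A (minv f))).re := by
    rw [hs, Complex.ofReal_re, Z_id]
    nlinarith [Complex.normSq_nonneg A.permanent, (Nat.one_le_cast (α := ℝ)).mpr hs1]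
  have h1 : (∑ f ∈ univ.filter (fun f : n → n => minv f = minv (id : n → n)),
        (k f f : ℂ) * ((starRingEnd ℂ) (e A f) * Z A (minv f))).re
      ≤ (A * Aᴴ).permanent.re := by
    calc _ ≤ ∑ μ ∈ univ.image (minv (n := n)),
          (∑ f ∈ univ.filter (fun f : n → n => minv f = μ),
            (k f f : ℂ) * ((starRingEnd ℂ) (e A f) * Z A (minv f))).re :=
        Finset.single_le_sum hre hmem
      _ = (A * Aᴴ).permanent.re := by rw [key]; exact (Complex.re_sum _ _).symm
  rw [Complex.sq_norm]
  linarith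

end PermCS

namespace PermCS

lemma perm_fixing_card (t : Finset n) :
    (univ.filter fun σ : Perm n => ∀ i ∈ t, σ i = i).card = Nat.factorial (Fintype.card n - t.card) := by
  rw [← Fintype.card_subtype]
  have e1 : {σ : Perm n // ∀ i ∈ t, σ i = i} ≃ {σ : Perm n // ∀ a, ¬ (a ∉ t) → σ a = a} :=
    Equiv.subtypeEquiv (Equiv.refl _) (by
      intro σ
      constructor
      · intro h a ha; exact h a (not_not.mp ha)
      · intro h a ha; exact h a (not_not_intro ha))
  have e2 : {σ : Perm n // ∀ a, ¬ (a ∉ t) → σ a = a} ≃ Perm {a : n // a ∉ t} :=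
    (Equiv.Perm.subtypeEquivSubtypePerm (fun a => a ∉ t)).symm
  rw [Fintype.card_congr (e1.trans e2), Fintype.card_perm]
  congr 1
  rw [Fintype.card_subtype_compl, Fintype.card_coe]

lemma per_eval (c : ℝ) :
    (Matrix.permanent (Matrix.of fun i k : n => if i = k then ((c : ℂ) - 1) else -1))
    = (((∑ j ∈ Finset.range (Fintype.card n + 1),
        (-1 : ℝ) ^ (Fintype.card n - j) * (Fintype.card n).choose j
          * Nat.factorial (Fintype.card n - j) * c ^ j : ℝ)) : ℂ) := by
  set N := Fintype.card n with hN
  have h1 : ∀ σ : Perm n, ∏ i, (Matrix.of fun i k : n => if i = k then ((c : ℂ) - 1) else -1) (σ i) i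
      = ∑ t ∈ univ.powerset, ((c : ℂ) ^ t.card * (if (∀ i ∈ t, σ i = i) then 1 else 0))
          * (-1 : ℂ) ^ (N - t.card) := by
    intro σ
    have : ∀ i : n, (Matrix.of fun i k : n => if i = k then ((c : ℂ) - 1) else -1) (σ i) i
        = ((c : ℂ) * (if σ i = i then 1 else 0)) + (-1) := by
      intro i
      by_cases h : σ i = i <;> simp [h, sub_eq_add_neg]
    rw [Finset.prod_congr rfl (fun i _ => this i), Finset.prod_add]
    refine Finset.sum_congr rfl fun t ht => ?_
    rw [Finset.prod_mul_distrib, Finset.prod_const, Finset.prod_boole, Finset.prod_const,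
      Finset.card_sdiff_of_subset (mem_powerset.mp ht), Finset.card_univ, ← hN]
    congr 2
    convert rfl
  rw [Matrix.permanent, Finset.sum_congr rfl (fun σ _ => h1 σ), Finset.sum_comm]
  have h2 : ∀ t ∈ univ.powerset,
      ∑ σ : Perm n, ((c : ℂ) ^ t.card * (if (∀ i ∈ t, σ i = i) then 1 else 0))
          * (-1 : ℂ) ^ (N - t.card)
      = (-1 : ℂ) ^ (N - t.card) * (Nat.factorial (N - t.card) : ℂ) * (c : ℂ) ^ t.card := by
    intro t _
    rw [← Finset.sum_mul, ← Finset.mul_sum, Finset.sum_boole, ← perm_fixing_card t]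
    push_cast
    ring
  rw [Finset.sum_congr rfl h2, Finset.sum_powerset]
  rw [Finset.card_univ, ← hN]
  push_cast
  refine Finset.sum_congr rfl fun j hj => ?_
  have h3 : ∀ t ∈ Finset.powersetCard j (univ : Finset n),
      (-1 : ℂ) ^ (N - t.card) * (Nat.factorial (N - t.card) : ℂ) * (c : ℂ) ^ t.card
      = (-1 : ℂ) ^ (N - j) * (Nat.factorial (N - j) : ℂ) * (c : ℂ) ^ j := by
    intro t ht
    rw [(Finset.mem_powersetCard.mp ht).2]
  rw [Finset.sum_congr rfl h3, Finset.sum_const, Finset.card_powersetCard, Finset.card_univ, ← hN,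
    nsmul_eq_mul]
  push_cast
  ring

end PermCS

namespace PermCS

lemma alt_nonneg (b : ℕ → ℝ) (hb0 : ∀ i, 0 ≤ b i) (hb : ∀ i, b (i+1) ≤ b i) :
    ∀ m s, 0 ≤ ∑ j ∈ Finset.range m, (-1:ℝ)^j * b (s + j) := by
  intro m
  induction m using Nat.strong_induction_on with
  | _ m ih =>
    match m with
    | 0 => intro s; simp
    | 1 => intro s; simpa using hb0 s
    | (m+2) =>
      intro s
      rw [Finset.sum_range_succ', Finset.sum_range_succ']
      have h1 : ∀ j, (-1:ℝ)^(j+1+1) * b (s + (j+1+1)) = (-1)^j * b ((s+2) + j) := by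
        intro j
        rw [show s + (j+1+1) = (s+2)+j by ring, pow_succ, pow_succ]
        ring
      rw [Finset.sum_congr rfl (fun j _ => h1 j)]
      have h2 := ih m (by omega) (s+2)
      have h3 : b (s+1) ≤ b (s+0) := by simpa using hb s
      have h4 : (-1:ℝ)^(0+1) * b (s+(0+1)) + (-1:ℝ)^0 * b (s+0) = b (s+0) - b (s+1) := by
        norm_num
        ring
      linarith [h4]

lemma alt_le (b : ℕ → ℝ) (hb0 : ∀ i, 0 ≤ b i) (hb : ∀ i, b (i+1) ≤ b i) (m : ℕ) (hm : 3 ≤ m) :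
    ∑ j ∈ Finset.range m, (-1:ℝ)^j * b j ≤ b 0 - b 1 + b 2 := by
  rw [Finset.range_eq_Ico, ← Finset.sum_Ico_consecutive _ (by omega : 0 ≤ 3) hm]
  have h1 : ∑ j ∈ Finset.Ico 0 3, (-1:ℝ)^j * b j = b 0 - b 1 + b 2 := by
    rw [← Finset.range_eq_Ico]
    simp [Finset.sum_range_succ]
    ring
  have h2 : ∑ j ∈ Finset.Ico 3 m, (-1:ℝ)^j * b j ≤ 0 := by
    rw [Finset.sum_Ico_eq_sum_range]
    have h3 : ∀ j, (-1:ℝ)^(3+j) * b (3+j) = -((-1)^j * b (3+j)) := by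
      intro j
      rw [pow_add]
      ring
    rw [Finset.sum_congr rfl (fun j _ => h3 j)]
    rw [Finset.sum_neg_distrib]
    have := alt_nonneg b hb0 hb (m - 3) 3
    linarith
  linarith

end PermCS

namespace PermCS

lemma R_le (p : ℕ) (hp : 2 ≤ p) :
    (∑ j ∈ Finset.range ((p-1) + 1), (-1:ℝ)^((p-1) - j) * ((p-1).choose j)
        * Nat.factorial ((p-1) - j) * (p:ℝ)^j)
    ≤ (1 + ((p:ℝ) - 2) * (p:ℝ)^(p-1)) / ((p:ℝ) - 1) := by
  set N := p - 1 with hNdef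
  have hpN : p = N + 1 := by omega
  rcases Nat.lt_or_ge p 3 with hp2 | hp3
  · -- p = 2
    have : p = 2 := by omega
    subst this
    norm_num [Finset.sum_range_succ]
  · -- p ≥ 3, so N ≥ 2
    have hN2 : 2 ≤ N := by omega
    set x : ℝ := (p : ℝ) with hx
    have hx3 : (3:ℝ) ≤ x := by exact_mod_cast Nat.cast_le.mpr hp3
    set b : ℕ → ℝ := fun i => (N.descFactorial i : ℝ) * x^(N-i) with hb
    have hb0 : ∀ i, 0 ≤ b i := by
      intro i
      apply mul_nonneg (by positivity)
      positivity
    have hbmono : ∀ i, b (i+1) ≤ b i := by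
      intro i
      rcases Nat.lt_or_ge i N with h | h
      · have h1 : N - i = (N - (i+1)) + 1 := by omega
        rw [hb]
        simp only
        rw [Nat.descFactorial_succ, h1, pow_succ]
        push_cast
        have h2 : ((N - (i+1) : ℕ) : ℝ) + 1 ≤ x := by
          have hle : (N - (i+1)) + 1 ≤ N := by omega
          have hc : ((N - (i+1) : ℕ) : ℝ) + 1 ≤ (N : ℝ) := by exact_mod_cast hle
          have hNx : (N : ℝ) ≤ x := by
            rw [hx, hpN]
            push_cast
            linarith
          linarith
        have h3 : (0:ℝ) ≤ (N.descFactorial i : ℝ) * x ^ (N - (i+1)) := by positivity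
        nlinarith [h3, h2]
      · rw [hb]
        simp only
        rw [Nat.descFactorial_eq_zero_iff_lt.mpr (by omega)]
        simp [hb0]
        positivity
    have hrefl : (∑ j ∈ Finset.range (N + 1), (-1:ℝ)^(N - j) * (N.choose j)
          * Nat.factorial (N - j) * x^j)
        = ∑ j ∈ Finset.range (N+1), (-1:ℝ)^j * b j := by
      rw [← Finset.sum_range_reflect]
      refine Finset.sum_congr rfl fun j hj => ?_
      have hj' : j ≤ N := by
        rw [Finset.mem_range] at hj
        omega
      have h1 : N + 1 - 1 - j = N - j := by omega
      have h2 : N - (N - j) = j := by omega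
      rw [h1, h2, Nat.choose_symm hj', hb]
      simp only
      rw [Nat.descFactorial_eq_factorial_mul_choose]
      push_cast
      ring
    have halt := alt_le b hb0 hbmono (N+1) (by omega)
    set q := N - 2 with hq
    have hNq : N = q + 2 := by omega
    set y : ℝ := x^q with hy
    have hb0v : b 0 = y * x^2 := by
      rw [hb]
      simp only [Nat.descFactorial, Nat.sub_zero, Nat.cast_one, one_mul, hNq, pow_add, hy]
    have hb1v : b 1 = (x - 1) * (y * x) := by
      rw [hb]
      simp only
      have hd : N.descFactorial 1 = N := by
        simp [Nat.descFactorial]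
      have hNx : (N : ℝ) = x - 1 := by
        rw [hx, hpN]
        push_cast
        ring
      rw [hd, hNx, show N - 1 = q + 1 by omega, pow_add]
      ring
    have hb2v : b 2 = (x - 1) * (x - 2) * y := by
      rw [hb]
      simp only
      have hd : N.descFactorial 2 = (N - 1) * N := by
        simp [Nat.descFactorial]
      have hNx : (N : ℝ) = x - 1 := by
        rw [hx, hpN]
        push_cast
        ring
      have hN1x : ((N - 1 : ℕ) : ℝ) = x - 2 := by
        rw [Nat.cast_sub (by omega), hNx]
        ring
      rw [hd, show N - 2 = q by omega]
      push_cast [Nat.cast_sub (show 1 ≤ N by omega)]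
      rw [hNx]
      ring
    have hx1 : (0:ℝ) < x - 1 := by linarith
    rw [le_div_iff₀ hx1]
    have hxN : x^N = y * x^2 := by rw [hNq, pow_add, hy]
    have hxq1 : (1:ℝ) ≤ y := by
      rw [hy]
      apply one_le_pow₀
      linarith
    calc (∑ j ∈ Finset.range (N + 1), (-1:ℝ)^(N - j) * (N.choose j)
          * Nat.factorial (N - j) * x^j) * (x - 1)
        ≤ (b 0 - b 1 + b 2) * (x - 1) := by
          rw [hrefl]
          exact mul_le_mul_of_nonneg_right halt (by linarith)
      _ ≤ 1 + (x - 2) * x^N := by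
          rw [hb0v, hb1v, hb2v, hxN]
          rcases Nat.eq_zero_or_pos q with hq0 | hq1
          · have : y = 1 := by rw [hy, hq0, pow_zero]
            rw [this]
            nlinarith [hx3]
          · have hx4 : (4:ℝ) ≤ x := by
              have : 4 ≤ p := by omega
              rw [hx]
              exact_mod_cast this
            nlinarith [mul_nonneg (show (0:ℝ) ≤ y by linarith)
              (mul_nonneg (show (0:ℝ) ≤ x by linarith) (show (0:ℝ) ≤ x - 4 by linarith)), hxq1]

end PermCS

open Complex

theorem stmt_7 (p : ℕ) (hp : p.Prime)
    (ζ : ℂ) (hζ : ζ = Complex.exp (2 * Real.pi * Complex.I / p))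
    (V : Matrix (Fin (p - 1)) (Fin (p - 1)) ℂ)
    (hV : ∀ i j, V i j = ζ ^ (((i : ℕ) + 1) * ((j : ℕ) + 1))) :
    ‖V.permanent‖ ^ 2 ≤ (1 + (p - 2) * (p : ℝ) ^ (p - 1)) / (p - 1) := by
  classical
  have hp2 : 2 ≤ p := hp.two_le
  have hprim : IsPrimitiveRoot ζ p := by
    rw [hζ]
    exact Complex.isPrimitiveRoot_exp p hp.pos.ne'
  have hζ0 : ζ ≠ 0 := by
    rw [hζ]
    exact Complex.exp_ne_zero _
  have hconj : (starRingEnd ℂ) ζ = ζ⁻¹ := by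
    rw [hζ, ← Complex.exp_conj, ← Complex.exp_neg]
    congr 1
    simp [map_div₀, Complex.conj_I, map_ofNat]
    ring
  have hVV : V * Vᴴ = Matrix.of fun i k : Fin (p-1) =>
      if i = k then ((((p:ℝ)):ℂ) - 1) else -1 := by
    ext i k
    rw [Matrix.mul_apply]
    simp only [Matrix.conjTranspose_apply, Matrix.of_apply]
    set d : ℤ := ((i:ℕ):ℤ) - ((k:ℕ):ℤ) with hd
    have hterm : ∀ j : Fin (p-1), V i j * star (V k j) = (ζ ^ d) ^ ((j:ℕ)+1) := by
      intro j
      rw [hV i j, hV k j]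
      have h1 : star (ζ ^ (((k:ℕ) + 1) * ((j:ℕ) + 1))) = ζ ^ (-((((k:ℕ) + 1) * ((j:ℕ) + 1) : ℕ) : ℤ)) := by
        rw [star_pow, show (star ζ) = (starRingEnd ℂ) ζ from rfl, hconj, inv_pow, ← zpow_natCast,
          ← zpow_neg]
      rw [h1, ← zpow_natCast ζ (((i:ℕ) + 1) * ((j:ℕ) + 1)), ← zpow_add₀ hζ0]
      rw [show ((((i:ℕ) + 1) * ((j:ℕ) + 1) : ℕ) : ℤ) + -((((k:ℕ) + 1) * ((j:ℕ) + 1) : ℕ) : ℤ)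
        = d * (((j:ℕ):ℤ) + 1) by push_cast; ring]
      rw [zpow_mul, show (((j:ℕ):ℤ) + 1) = (((j:ℕ) + 1 : ℕ) : ℤ) by push_cast; ring,
        zpow_natCast]
    rw [Finset.sum_congr rfl (fun j _ => hterm j)]
    by_cases hik : i = k
    · subst hik
      have : d = 0 := by simp [hd]
      rw [this]
      simp only [zpow_zero, one_pow, Finset.sum_const, Finset.card_univ, Fintype.card_fin,
        nsmul_eq_mul, mul_one, if_pos rfl]
      push_cast [Nat.cast_sub hp.one_le]
      ring
    · rw [if_neg hik]
      set w : ℂ := ζ ^ d with hw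
      have hd0 : d ≠ 0 := by
        simp only [hd, sub_ne_zero]
        exact_mod_cast fun h => hik (Fin.ext (by exact_mod_cast h))
      have hw1 : w ≠ 1 := by
        intro h
        have hdvd : ((p:ℕ):ℤ) ∣ d := (hprim.zpow_eq_one_iff_dvd d).mp h
        have habs : |d| < ((p:ℕ):ℤ) := by
          have hi : (i:ℕ) < p - 1 := i.isLt
          have hk : (k:ℕ) < p - 1 := k.isLt
          rw [hd, abs_lt]
          constructor <;> omega
        exact hd0 (Int.eq_zero_of_abs_lt_dvd hdvd habs)
      have hwp : w ^ p = 1 := by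
        rw [hw, ← zpow_natCast (ζ ^ d) p, ← zpow_mul, mul_comm, zpow_mul, zpow_natCast,
          hprim.pow_eq_one, one_zpow]
      have hgeo : ∑ j ∈ Finset.range p, w ^ j = 0 := by
        rw [geom_sum_eq hw1, hwp]
        simp
      have h2 : ∑ j : Fin (p-1), w ^ ((j:ℕ)+1) = (∑ j ∈ Finset.range (p-1), w ^ j) * w := by
        rw [Fin.sum_univ_eq_sum_range (fun j => w ^ (j+1)) (p-1), Finset.sum_mul]
        exact Finset.sum_congr rfl fun j _ => by rw [pow_succ]
      have h3 : ∑ j ∈ Finset.range (p-1), w ^ j = - w ^ (p-1) := by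
        have := hgeo
        rw [show p = (p-1) + 1 by omega, Finset.sum_range_succ] at this
        linear_combination this
      rw [h2, h3]
      rw [neg_mul, ← pow_succ, show (p-1) + 1 = p by omega, hwp]
  have hper := PermCS.cs V
  rw [hVV] at hper
  have heval := PermCS.per_eval (n := Fin (p-1)) ((p : ℝ))
  rw [Fintype.card_fin] at heval
  rw [heval, Complex.ofReal_re] at hper
  have hR := PermCS.R_le p hp2
  calc ‖V.permanent‖ ^ 2 ≤ _ := hper
    _ ≤ _ := hR
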